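/- arXiv:2104.07641 — 5 statements merged into one kernel-verified Lean document; each statement's English description precedes it below -/
import Mathlib

section
/- The set of singular vectors in ℝ^m has Lebesgue measure zero, where x ∈ ℝ^m is singular if for every c > 0 and all sufficiently large T there exist p ∈ ℤ and nonzero q ∈ ℤ^m with |q · x + p| < c/T^m and ‖q‖_∞ ≤ T. -/
open scoped BigOperators
open MeasureTheory

open scoped ENNReal

lemma slab_bound (m : ℕ) (q : Fin m → ℤ) (i : Fin m) (hqi : q i ≠ 0)
    (hmax : ∀ j, |q j| ≤ |q i|) (z : Fin m → ℤ) (ε : ℝ) (hε : 0 < ε) (hε1 : ε ≤ 1) :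
    volume {x : Fin m → ℝ | (∀ j, x j ∈ Set.Ico (z j : ℝ) ((z j : ℝ) + 1)) ∧
      ∃ p : ℤ, |(∑ j, (q j : ℝ) * x j) + (p : ℝ)| < ε} ≤ ENNReal.ofReal (14 * m * ε) := by
  classical
  set M : Matrix (Fin m) (Fin m) ℝ := (1 : Matrix (Fin m) (Fin m) ℝ).updateRow i (fun k => (q k : ℝ)) with hM
  have hdet : M.det = (q i : ℝ) := by
    have hrow : (fun k => (q k : ℝ)) = ∑ k, (q k : ℝ) • (1 : Matrix (Fin m) (Fin m) ℝ) k := by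
      funext l
      simp [Matrix.one_apply, Finset.sum_ite_eq, Pi.smul_apply]
    rw [hM, hrow, Matrix.det_updateRow_sum]
    simp
  set f : (Fin m → ℝ) →ₗ[ℝ] (Fin m → ℝ) := Matrix.toLin' M with hf
  have hdetf : LinearMap.det f = (q i : ℝ) := by
    rw [hf, LinearMap.det_toLin', hdet]
  have hdetne : LinearMap.det f ≠ 0 := by
    rw [hdetf]; exact_mod_cast hqi
  set L : ℤ := ∑ j, |q j| with hL
  set A : ℤ := ∑ j, q j * z j with hA
  set s : Fin m → Set ℝ := fun j =>
    if j = i then {t : ℝ | ∃ p : ℤ, |t + (p : ℝ)| < ε ∧ |t - (A : ℝ)| ≤ (L : ℝ)}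
    else Set.Ico (z j : ℝ) ((z j : ℝ) + 1) with hs
  have hsubset : {x : Fin m → ℝ | (∀ j, x j ∈ Set.Ico (z j : ℝ) ((z j : ℝ) + 1)) ∧
      ∃ p : ℤ, |(∑ j, (q j : ℝ) * x j) + (p : ℝ)| < ε} ⊆ f ⁻¹' (Set.pi Set.univ s) := by
    rintro x ⟨hx, p, hp⟩
    have hfx : ∀ j, f x j = if j = i then ∑ k, (q k : ℝ) * x k else x j := by
      intro j
      rw [hf, Matrix.toLin'_apply]
      by_cases hj : j = i
      · subst hj
        simp [Matrix.mulVec, dotProduct, hM, Matrix.updateRow_apply]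
      · have hrj : M j = (1 : Matrix (Fin m) (Fin m) ℝ) j := Matrix.updateRow_ne hj
        simp [Matrix.mulVec, hrj, dotProduct, Matrix.one_apply, hj]
    intro j _
    rw [hfx j]
    by_cases hj : j = i
    · subst hj
      simp only [hs, if_pos rfl, Set.mem_setOf_eq]
      refine ⟨p, by simpa using hp, ?_⟩
      rw [if_pos trivial]
      have : (∑ k, (q k : ℝ) * x k) - (A : ℝ) = ∑ k, (q k : ℝ) * (x k - (z k : ℝ)) := by
        push_cast [hA]
        rw [← Finset.sum_sub_distrib]
        congr 1; funext k; ring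
      rw [this]
      calc |∑ k, (q k : ℝ) * (x k - (z k : ℝ))| ≤ ∑ k, |(q k : ℝ) * (x k - (z k : ℝ))| :=
            Finset.abs_sum_le_sum_abs _ _
        _ ≤ ∑ k, |(q k : ℝ)| * 1 := by
            refine Finset.sum_le_sum fun k _ => ?_
            rw [abs_mul]
            refine mul_le_mul_of_nonneg_left ?_ (abs_nonneg _)
            have h1 := (hx k).1
            have h2 := (hx k).2
            rw [abs_le]; constructor <;> linarith
        _ = (L : ℝ) := by push_cast [hL]; simp
    · simp only [hs, if_neg hj]
      exact hx j
  have hm : 1 ≤ m := Nat.one_le_iff_ne_zero.mpr (by rintro rfl; exact i.elim0)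
  have hqi1 : (1 : ℤ) ≤ |q i| := Int.one_le_abs hqi
  have hLm : L ≤ m * |q i| := by
    rw [hL]
    calc ∑ j, |q j| ≤ ∑ _j : Fin m, |q i| := Finset.sum_le_sum fun j _ => hmax j
      _ = m * |q i| := by simp [Finset.sum_const, mul_comm]
  have hL0 : (0 : ℤ) ≤ L := Finset.sum_nonneg fun j _ => abs_nonneg _
  have hsi : volume (s i) ≤ ∑ k ∈ Finset.Icc (A - L - 2) (A + L + 2),
      volume (Metric.ball (k : ℝ) ε) := by
    refine le_trans (measure_mono ?_) (measure_biUnion_finset_le _ _)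
    intro t ht
    simp only [hs, if_pos rfl, Set.mem_setOf_eq] at ht
    obtain ⟨p, hp1, hp2⟩ := ht
    have hk : ((-p : ℤ) : ℝ) = -(p : ℝ) := by push_cast; ring
    have hmem : (-p) ∈ Finset.Icc (A - L - 2) (A + L + 2) := by
      have habs : |((-p : ℤ) : ℝ) - (A : ℝ)| < (L : ℝ) + 2 := by
        calc |((-p : ℤ) : ℝ) - (A : ℝ)| ≤ |((-p : ℤ) : ℝ) - t| + |t - (A : ℝ)| := abs_sub_le _ _ _
          _ < ε + ((L : ℝ) + 1) := by
              refine add_lt_add_of_lt_of_le ?_ (by linarith)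
              rw [hk, abs_sub_comm]
              simpa [abs_sub_comm, sub_neg_eq_add] using hp1
          _ ≤ (L : ℝ) + 2 := by linarith
      have : |(-p) - A| < L + 2 := by exact_mod_cast habs
      rw [abs_lt] at this
      simp only [Finset.mem_Icc]
      omega
    refine Set.mem_biUnion hmem ?_
    simp only [Metric.mem_ball, Real.dist_eq, hk]
    simpa [sub_neg_eq_add] using hp1
  calc volume {x : Fin m → ℝ | (∀ j, x j ∈ Set.Ico (z j : ℝ) ((z j : ℝ) + 1)) ∧
      ∃ p : ℤ, |(∑ j, (q j : ℝ) * x j) + (p : ℝ)| < ε}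
      ≤ volume (f ⁻¹' (Set.pi Set.univ s)) := measure_mono hsubset
    _ = ENNReal.ofReal |(LinearMap.det f)⁻¹| * volume (Set.pi Set.univ s) :=
        Measure.addHaar_preimage_linearMap volume hdetne _
    _ = ENNReal.ofReal |(LinearMap.det f)⁻¹| * ∏ j, volume (s j) := by rw [volume_pi_pi]
    _ = ENNReal.ofReal |(LinearMap.det f)⁻¹| * volume (s i) := by
        congr 1
        refine Finset.prod_eq_single i (fun j _ hj => ?_) (by simp)
        simp [hs, if_neg hj, Real.volume_Ico]
    _ ≤ ENNReal.ofReal |(LinearMap.det f)⁻¹| * ∑ k ∈ Finset.Icc (A - L - 2) (A + L + 2),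
        volume (Metric.ball (k : ℝ) ε) := by gcongr
    _ ≤ ENNReal.ofReal (14 * m * ε) := by
        simp only [Real.volume_ball]
        rw [Finset.sum_const, Int.card_Icc, nsmul_eq_mul, hdetf]
        have hcard : ((A + L + 2 + 1 - (A - L - 2)).toNat : ℝ) = 2 * (L : ℝ) + 5 := by
          have h0 : (0 : ℤ) ≤ A + L + 2 + 1 - (A - L - 2) := by
            have : (0:ℤ) ≤ L := hL0
            omega
          rw [show ((A + L + 2 + 1 - (A - L - 2)).toNat : ℝ)
              = (((A + L + 2 + 1 - (A - L - 2)).toNat : ℤ) : ℝ) by push_cast; ring,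
            Int.toNat_of_nonneg h0]
          push_cast; ring
        rw [← ENNReal.ofReal_natCast, ← ENNReal.ofReal_mul (by positivity),
          ← ENNReal.ofReal_mul (by positivity)]
        refine ENNReal.ofReal_le_ofReal ?_
        rw [hcard]
        have h1 : |((q i : ℝ))⁻¹| = ((|q i| : ℤ) : ℝ)⁻¹ := by
          rw [abs_inv]; norm_cast
        rw [h1]
        have h2 : (1 : ℝ) ≤ ((|q i| : ℤ) : ℝ) := by exact_mod_cast hqi1
        have h3 : ((L : ℤ) : ℝ) ≤ (m : ℝ) * ((|q i| : ℤ) : ℝ) := by exact_mod_cast hLm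
        have h4 : (1 : ℝ) ≤ (m : ℝ) := by exact_mod_cast hm
        have h5 : (0 : ℝ) < ((|q i| : ℤ) : ℝ) := by linarith
        rw [inv_mul_le_iff₀ h5]
        have h6 : |(q i : ℝ)| = ((|q i| : ℤ) : ℝ) := by norm_cast
        set B : ℝ := ((|q i| : ℤ) : ℝ)
        have k1 : (L : ℝ) * ε ≤ (m : ℝ) * B * ε :=
          mul_le_mul_of_nonneg_right h3 hε.le
        have hmB : (1 : ℝ) ≤ (m : ℝ) * B := by nlinarith
        have k2 : ε ≤ (m : ℝ) * B * ε := by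
          nlinarith [mul_nonneg (sub_nonneg.mpr hmB) hε.le]
        nlinarith

lemma box_bound (m n : ℕ) (z : Fin m → ℤ) (ε : ℝ) (hε : 0 < ε) (hε1 : ε ≤ 1) :
    volume {x : Fin m → ℝ | (∀ j, x j ∈ Set.Ico (z j : ℝ) ((z j : ℝ) + 1)) ∧
      ∃ (p : ℤ) (q : Fin m → ℤ), q ≠ 0 ∧ (∀ i, (|q i| : ℝ) ≤ (n : ℝ)) ∧
        |(∑ i, (q i : ℝ) * x i) + (p : ℝ)| < ε}
    ≤ (((2 * n + 1) ^ m : ℕ) : ℝ≥0∞) * ENNReal.ofReal (14 * m * ε) := by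
  classical
  set F : Finset (Fin m → ℤ) :=
    (Fintype.piFinset fun _ : Fin m => Finset.Icc (-(n : ℤ)) (n : ℤ)).erase 0 with hF
  have hsub : {x : Fin m → ℝ | (∀ j, x j ∈ Set.Ico (z j : ℝ) ((z j : ℝ) + 1)) ∧
      ∃ (p : ℤ) (q : Fin m → ℤ), q ≠ 0 ∧ (∀ i, (|q i| : ℝ) ≤ (n : ℝ)) ∧
        |(∑ i, (q i : ℝ) * x i) + (p : ℝ)| < ε}
      ⊆ ⋃ q ∈ F, {x : Fin m → ℝ | (∀ j, x j ∈ Set.Ico (z j : ℝ) ((z j : ℝ) + 1)) ∧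
        ∃ p : ℤ, |(∑ j, (q j : ℝ) * x j) + (p : ℝ)| < ε} := by
    rintro x ⟨hx, p, q, hq0, hqn, hlt⟩
    have hqF : q ∈ F := by
      rw [hF, Finset.mem_erase]
      refine ⟨hq0, ?_⟩
      rw [Fintype.mem_piFinset]
      intro i
      rw [Finset.mem_Icc]
      have : (|q i| : ℝ) ≤ (n : ℝ) := hqn i
      have h2 : |q i| ≤ (n : ℤ) := by exact_mod_cast this
      rw [abs_le] at h2
      exact h2
    exact Set.mem_biUnion hqF ⟨hx, p, hlt⟩
  calc volume _ ≤ ∑ q ∈ F, volume {x : Fin m → ℝ |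
        (∀ j, x j ∈ Set.Ico (z j : ℝ) ((z j : ℝ) + 1)) ∧
        ∃ p : ℤ, |(∑ j, (q j : ℝ) * x j) + (p : ℝ)| < ε} :=
      le_trans (measure_mono hsub) (measure_biUnion_finset_le _ _)
    _ ≤ ∑ _q ∈ F, ENNReal.ofReal (14 * m * ε) := by
      refine Finset.sum_le_sum fun q hq => ?_
      rw [hF, Finset.mem_erase] at hq
      obtain ⟨hq0, _⟩ := hq
      obtain ⟨j, hj⟩ := Function.ne_iff.mp hq0
      obtain ⟨i, _, hi⟩ := Finset.exists_max_image Finset.univ (fun j => |q j|)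
        ⟨j, Finset.mem_univ j⟩
      have hqi : q i ≠ 0 := by
        have h1 : 1 ≤ |q j| := Int.one_le_abs (by simpa using hj)
        intro h
        have h2 := hi j (Finset.mem_univ j)
        rw [h, abs_zero] at h2
        omega
      exact slab_bound m q i hqi (fun j => hi j (Finset.mem_univ j)) z ε hε hε1
    _ ≤ (((2 * n + 1) ^ m : ℕ) : ℝ≥0∞) * ENNReal.ofReal (14 * m * ε) := by
      rw [Finset.sum_const, nsmul_eq_mul]
      gcongr
      have hcard : (Fintype.piFinset fun _ : Fin m => Finset.Icc (-(n : ℤ)) (n : ℤ)).card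
          = (2 * n + 1) ^ m := by
        rw [Fintype.card_piFinset]
        have hc : (Finset.Icc (-(n : ℤ)) (n : ℤ)).card = 2 * n + 1 := by
          rw [Int.card_Icc]; omega
        simp [hc]
      have h3 : F.card ≤ (2 * n + 1) ^ m :=
        le_trans (Finset.card_le_card (Finset.erase_subset _ _)) hcard.le
      exact_mod_cast h3

/-- The set of singular vectors in `ℝ^m` has Lebesgue measure zero. -/
theorem singular_set_measure_zero (m : ℕ) :
    volume {x : Fin m → ℝ | ∀ c : ℝ, 0 < c → ∃ T₀ : ℝ, ∀ T : ℝ, T₀ ≤ T →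
      ∃ (p : ℤ) (q : Fin m → ℤ), q ≠ 0 ∧ (∀ i, (|q i| : ℝ) ≤ T) ∧
        |(∑ i, (q i : ℝ) * x i) + (p : ℝ)| < c / T ^ m} = 0 := by
  classical
  set S := {x : Fin m → ℝ | ∀ c : ℝ, 0 < c → ∃ T₀ : ℝ, ∀ T : ℝ, T₀ ≤ T →
      ∃ (p : ℤ) (q : Fin m → ℤ), q ≠ 0 ∧ (∀ i, (|q i| : ℝ) ≤ T) ∧
        |(∑ i, (q i : ℝ) * x i) + (p : ℝ)| < c / T ^ m} with hS
  rcases Nat.eq_zero_or_pos m with hm0 | hm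
  · subst hm0
    have : S = ∅ := by
      ext x
      simp only [Set.mem_empty_iff_false, iff_false]
      intro hx
      obtain ⟨T₀, hT₀⟩ := hx 1 one_pos
      obtain ⟨p, q, hq0, -, -⟩ := hT₀ T₀ le_rfl
      exact hq0 (Subsingleton.elim q 0)
    rw [this]; simp
  -- m ≥ 1 case
  set cube : (Fin m → ℤ) → Set (Fin m → ℝ) :=
    fun z => {x | ∀ j, x j ∈ Set.Ico (z j : ℝ) ((z j : ℝ) + 1)} with hcube
  have hkey : ∀ z : Fin m → ℤ, volume (S ∩ cube z) = 0 := by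
    intro z
    set C : ℝ := (3 : ℝ) ^ m * (14 * m) with hC
    have hCpos : 0 < C := by
      have hmpos : (0 : ℝ) < (m : ℝ) := by exact_mod_cast hm
      rw [hC]; positivity
    have hbound : ∀ c : ℝ, 0 < c → volume (S ∩ cube z) ≤ ENNReal.ofReal (C * c) := by
      intro c hc
      set G : ℕ → Set (Fin m → ℝ) := fun n =>
        {x : Fin m → ℝ | (∀ j, x j ∈ Set.Ico (z j : ℝ) ((z j : ℝ) + 1)) ∧
          ∃ (p : ℤ) (q : Fin m → ℤ), q ≠ 0 ∧ (∀ i, (|q i| : ℝ) ≤ (n : ℝ)) ∧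
            |(∑ i, (q i : ℝ) * x i) + (p : ℝ)| < c / (n : ℝ) ^ m} with hG
      set X : ℕ → Set (Fin m → ℝ) := fun N => ⋂ (n : ℕ), ⋂ (_ : N ≤ n), G n with hX
      have hmono : Monotone X := by
        intro N N' hNN'
        rw [hX]
        exact fun x hx => Set.mem_iInter₂.mpr fun n hn =>
          Set.mem_iInter₂.mp hx n (le_trans hNN' hn)
      have hsub : S ∩ cube z ⊆ ⋃ N : ℕ, X N := by
        rintro x ⟨hxS, hxc⟩
        obtain ⟨T₀, hT₀⟩ := hxS c hc
        obtain ⟨N₀, hN₀⟩ := exists_nat_ge T₀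
        refine Set.mem_iUnion.mpr ⟨N₀, Set.mem_iInter₂.mpr fun n hn => ?_⟩
        have hTn : T₀ ≤ (n : ℝ) := le_trans hN₀ (by exact_mod_cast hn)
        obtain ⟨p, q, hq0, hqle, hlt⟩ := hT₀ (n : ℝ) hTn
        exact ⟨hxc, p, q, hq0, hqle, hlt⟩
      have hXbound : ∀ N : ℕ, volume (X N) ≤ ENNReal.ofReal (C * c) := by
        intro N
        set n₀ : ℕ := max N (max 1 ⌈c⌉₊) with hn₀
        have hn₀1 : 1 ≤ n₀ := le_trans (le_max_left 1 ⌈c⌉₊) (le_max_right N _)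
        have hn₀c : c ≤ (n₀ : ℝ) := by
          have : ⌈c⌉₊ ≤ n₀ := le_trans (le_max_right 1 ⌈c⌉₊) (le_max_right N _)
          exact le_trans (Nat.le_ceil c) (by exact_mod_cast this)
        have hn₀pow : (n₀ : ℝ) ≤ (n₀ : ℝ) ^ m :=
          le_self_pow₀ (by exact_mod_cast hn₀1) (Nat.pos_iff_ne_zero.mp hm)
        have hεpos : 0 < c / (n₀ : ℝ) ^ m := by positivity
        have hε1 : c / (n₀ : ℝ) ^ m ≤ 1 := by
          rw [div_le_one (by positivity)]
          linarith
        have hXG : X N ⊆ G n₀ := fun x hx =>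
          Set.mem_iInter₂.mp hx n₀ (le_max_left N _)
        refine le_trans (measure_mono hXG) (le_trans
          (box_bound m n₀ z (c / (n₀ : ℝ) ^ m) hεpos hε1) ?_)
        rw [← ENNReal.ofReal_natCast, ← ENNReal.ofReal_mul (by positivity)]
        refine ENNReal.ofReal_le_ofReal ?_
        have h1 : (((2 * n₀ + 1) ^ m : ℕ) : ℝ) ≤ (3 : ℝ) ^ m * (n₀ : ℝ) ^ m := by
          rw [← mul_pow]
          push_cast
          refine pow_le_pow_left₀ (by positivity) (by
            have : (1 : ℝ) ≤ (n₀ : ℝ) := by exact_mod_cast hn₀1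
            linarith) m
        have hP : (0 : ℝ) < (n₀ : ℝ) ^ m := by positivity
        have e2 : (((2 * n₀ + 1) ^ m : ℕ) : ℝ) / (n₀ : ℝ) ^ m ≤ (3 : ℝ) ^ m := by
          rw [div_le_iff₀ hP]; exact h1
        calc (((2 * n₀ + 1) ^ m : ℕ) : ℝ) * (14 * m * (c / (n₀ : ℝ) ^ m))
            = ((((2 * n₀ + 1) ^ m : ℕ) : ℝ) / (n₀ : ℝ) ^ m) * (14 * m * c) := by
              field_simp
          _ ≤ (3 : ℝ) ^ m * (14 * m * c) := by
              refine mul_le_mul_of_nonneg_right e2 (by positivity)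
          _ = C * c := by rw [hC]; ring
      calc volume (S ∩ cube z) ≤ volume (⋃ N : ℕ, X N) := measure_mono hsub
        _ = ⨆ N : ℕ, volume (X N) := (hmono.directed_le).measure_iUnion
        _ ≤ ENNReal.ofReal (C * c) := iSup_le hXbound
    refine le_antisymm ?_ zero_le
    refine ENNReal.le_of_forall_pos_le_add fun ε hε _ => ?_
    rw [zero_add]
    have hcpos : 0 < (ε : ℝ) / C := div_pos (by exact_mod_cast hε) hCpos
    refine le_trans (hbound _ hcpos) ?_
    rw [mul_div_cancel₀ _ (ne_of_gt hCpos)]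
    rw [ENNReal.ofReal_coe_nnreal]
  -- assemble
  have hcover : S ⊆ ⋃ z : Fin m → ℤ, S ∩ cube z := by
    intro x hx
    refine Set.mem_iUnion.mpr ⟨fun j => ⌊x j⌋, hx, fun j => ?_⟩
    exact ⟨Int.floor_le _, Int.lt_floor_add_one _⟩
  refine le_antisymm ?_ zero_le
  refine le_trans (measure_mono hcover) (le_trans (measure_iUnion_le _) ?_)
  simp [hkey]
end

section
/- Let G = SL_{m+1}(ℝ), Γ = SL_{m+1}(ℤ), g_t = diag(e^{mt}, e^{-t}, …, e^{-t}), and for x ∈ ℝ^m let u_x be the unipotent matrix with first row (1, x) and identity below. Then x is singular (for every c > 0 and all large T there exist p ∈ ℤ, nonzero q ∈ ℤ^m with |q·x+p| < c/T^m, ‖q‖ ≤ T) if and only if for every ε > 0 there exists t_ε such that for all t ≥ t_ε the lattice g_t u_x ℤ^{m+1} contains a nonzero vector of sup norm less than ε. -/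
open scoped BigOperators

/-- Dani correspondence: `x ∈ ℝ^m` is singular if and only if for every `ε > 0` and
all sufficiently large `t`, the lattice `g_t u_x ℤ^{m+1}` contains a nonzero vector
of sup norm less than `ε`; here the vector of `g_t u_x` applied to `(p, q)` has first
coordinate `e^{mt}(q·x + p)` and remaining coordinates `e^{-t} q_i`. -/
theorem dani_correspondence (m : ℕ) (hm : 0 < m) (x : Fin m → ℝ) :
    (∀ c : ℝ, 0 < c → ∃ T₀ : ℝ, ∀ T : ℝ, T₀ ≤ T →
      ∃ (p : ℤ) (q : Fin m → ℤ), q ≠ 0 ∧ (∀ i, (|q i| : ℝ) ≤ T) ∧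
        |(∑ i, (q i : ℝ) * x i) + (p : ℝ)| < c / T ^ m) ↔
    (∀ ε : ℝ, 0 < ε → ∃ t₀ : ℝ, ∀ t : ℝ, t₀ ≤ t →
      ∃ (p : ℤ) (q : Fin m → ℤ), ¬ (p = 0 ∧ q = 0) ∧
        Real.exp (m * t) * |(∑ i, (q i : ℝ) * x i) + (p : ℝ)| < ε ∧
        (∀ i, Real.exp (-t) * |(q i : ℝ)| < ε)) := by
  constructor
  · -- singular → lattice shrinks
    intro h ε hε
    have hε2 : (0:ℝ) < ε / 2 := by positivity
    obtain ⟨T₀, hT₀⟩ := h (ε * (ε / 2) ^ m) (by positivity)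
    have hM : (0:ℝ) < max T₀ 1 := lt_of_lt_of_le one_pos (le_max_right _ _)
    refine ⟨Real.log (2 * max T₀ 1 / ε), fun t ht => ?_⟩
    set T := ε / 2 * Real.exp t with hTdef
    have hexp : 2 * max T₀ 1 / ε ≤ Real.exp t := by
      have := Real.exp_le_exp.mpr ht
      rwa [Real.exp_log (by positivity)] at this
    have hTge : max T₀ 1 ≤ T := by
      rw [hTdef]
      have h2 : max T₀ 1 = ε / 2 * (2 * max T₀ 1 / ε) := by
        field_simp
      rw [h2]
      exact mul_le_mul_of_nonneg_left hexp (le_of_lt hε2)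
    have hTpos : 0 < T := lt_of_lt_of_le hM hTge
    obtain ⟨p, q, hq, hqT, hsmall⟩ := hT₀ T (le_trans (le_max_left _ _) hTge)
    have hexpt : 0 < Real.exp t := Real.exp_pos t
    have hTm : T ^ m = (ε / 2) ^ m * Real.exp ((m : ℝ) * t) := by
      rw [hTdef, mul_pow, Real.exp_nat_mul]
    refine ⟨p, q, fun h' => hq h'.2, ?_, fun i => ?_⟩
    · have hcdT : ε * (ε / 2) ^ m / T ^ m = ε / Real.exp ((m : ℝ) * t) := by
        rw [hTm]
        have hp : ((ε / 2) ^ m : ℝ) ≠ 0 := by positivity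
        field_simp
      rw [hcdT] at hsmall
      have hem : 0 < Real.exp ((m : ℝ) * t) := Real.exp_pos _
      rw [lt_div_iff₀ hem] at hsmall
      linarith [hsmall]
    · have h1 : (|q i| : ℝ) ≤ T := hqT i
      have hstep : Real.exp (-t) * |(q i : ℝ)| ≤ Real.exp (-t) * T := by
        apply mul_le_mul_of_nonneg_left _ (le_of_lt (Real.exp_pos _))
        exact_mod_cast h1
      have hE : Real.exp (-t) * T = ε / 2 := by
        rw [hTdef, Real.exp_neg]
        field_simp
      linarith
  · -- lattice shrinks → singular
    intro h c hc
    set ε := min 1 c with hεdef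
    have hε0 : (0:ℝ) < ε := lt_min one_pos hc
    have hε1 : ε ≤ 1 := min_le_left _ _
    have hεc : ε ≤ c := min_le_right _ _
    obtain ⟨t₀, ht₀⟩ := h ε hε0
    refine ⟨ε * Real.exp (max t₀ 0), fun T hT => ?_⟩
    have hTpos : 0 < T := lt_of_lt_of_le (by positivity) hT
    set t := Real.log (T / ε) with htdef
    have het : Real.exp t = T / ε := Real.exp_log (by positivity)
    have htge : max t₀ 0 ≤ t := by
      rw [htdef, Real.le_log_iff_exp_le (by positivity), le_div_iff₀ hε0]
      nlinarith [Real.exp_pos (max t₀ 0)]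
    obtain ⟨p, q, hpq, h1, h2⟩ := ht₀ t (le_trans (le_max_left _ _) htge)
    have ht0 : (0:ℝ) ≤ t := le_trans (le_max_right _ _) htge
    have hemt : Real.exp ((m : ℝ) * t) = Real.exp t ^ m := Real.exp_nat_mul t m
    have hem_pos : 0 < Real.exp ((m : ℝ) * t) := Real.exp_pos _
    have hqne : q ≠ 0 := by
      intro hq0
      have hp : p ≠ 0 := fun hp => hpq ⟨hp, hq0⟩
      have hp1 : (1:ℝ) ≤ |(p : ℝ)| := by
        have := Int.one_le_abs hp
        exact_mod_cast this
      have hsum : (∑ i, (q i : ℝ) * x i) = 0 := by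
        simp [hq0]
      rw [hsum, zero_add] at h1
      have hE1 : (1:ℝ) ≤ Real.exp ((m : ℝ) * t) :=
        Real.one_le_exp (by positivity)
      nlinarith
    refine ⟨p, q, hqne, fun i => ?_, ?_⟩
    · have hi := h2 i
      rw [Real.exp_neg, het] at hi
      have hinv : ((T / ε)⁻¹ : ℝ) = ε / T := by
        field_simp
      rw [hinv, div_mul_eq_mul_div, div_lt_iff₀ hTpos] at hi
      have : (|q i| : ℝ) = |(q i : ℝ)| := by push_cast; rfl
      rw [this]
      nlinarith [abs_nonneg ((q i : ℝ))]
    · rw [hemt, het, div_pow] at h1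
      rw [lt_div_iff₀ (by positivity : (0:ℝ) < T ^ m)]
      have hεm : ε ^ m ≤ 1 := pow_le_one₀ (le_of_lt hε0) hε1
      have hTm : (0:ℝ) < T ^ m := by positivity
      have hεmp : (0:ℝ) < ε ^ m := by positivity
      rw [div_mul_eq_mul_div, div_lt_iff₀ hεmp] at h1
      nlinarith [abs_nonneg ((∑ i, (q i : ℝ) * x i) + (p : ℝ))]
end

section
/- Let x ∈ ℝ^m and suppose that for some ε > 0 there is a sequence t_k → ∞ such that every nonzero vector v of the lattice g_{t_k} u_x ℤ^{m+1} satisfies ‖v‖ ≥ ε (with g_t = diag(e^{mt}, e^{-t},…,e^{-t}) and u_x unipotent with top row (1, x)). Then x is not singular: there exists c > 0 and a sequence Q_k → ∞ such that the system |q·x + p| < c/Q_k^m, 0 < ‖q‖ ≤ Q_k has no integer solution. -/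
open scoped BigOperators

/-- One direction of the Dani correspondence: if along a sequence `t_k → ∞` every
nonzero vector of the lattice `g_{t_k} u_x ℤ^{m+1}` has sup norm at least `ε`, then
`x` is not singular. -/
theorem nondivergent_implies_not_singular (m : ℕ) (hm : 0 < m) (x : Fin m → ℝ)
    (ε : ℝ) (hε : 0 < ε) (t : ℕ → ℝ)
    (ht : Filter.Tendsto t Filter.atTop Filter.atTop)
    (h : ∀ k, ∀ (p : ℤ) (q : Fin m → ℤ), ¬ (p = 0 ∧ q = 0) →
      ε ≤ Real.exp (m * t k) * |(∑ i, (q i : ℝ) * x i) + (p : ℝ)| ∨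
      ∃ i, ε ≤ Real.exp (-(t k)) * |(q i : ℝ)|) :
    ∃ c : ℝ, 0 < c ∧ ∃ Q : ℕ → ℝ, Filter.Tendsto Q Filter.atTop Filter.atTop ∧
      ∀ k, ¬ ∃ (p : ℤ) (q : Fin m → ℤ), q ≠ 0 ∧ (∀ i, (|q i| : ℝ) ≤ Q k) ∧
        |(∑ i, (q i : ℝ) * x i) + (p : ℝ)| < c / (Q k) ^ m := by
  refine ⟨ε ^ (m + 1) / 2 ^ m, by positivity, fun k => ε / 2 * Real.exp (t k), ?_, ?_⟩
  · exact (Real.tendsto_exp_atTop.comp ht).const_mul_atTop (half_pos hε)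
  · rintro k ⟨p, q, hq, hle, hlt⟩
    have hE : (0:ℝ) < Real.exp (t k) := Real.exp_pos _
    have hEm : (0:ℝ) < Real.exp (m * t k) := Real.exp_pos _
    have hQ : (ε / 2 * Real.exp (t k)) ^ m = ε ^ m / 2 ^ m * Real.exp (m * t k) := by
      rw [mul_pow, div_pow, ← Real.exp_nat_mul]
    rcases h k p q (fun h' => hq h'.2) with h1 | ⟨i, h2⟩
    · have hlt' : |(∑ i, (q i : ℝ) * x i) + p| < ε / Real.exp (m * t k) := by
        calc |(∑ i, (q i : ℝ) * x i) + p|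
            < ε ^ (m+1) / 2 ^ m / (ε / 2 * Real.exp (t k)) ^ m := hlt
          _ = ε / Real.exp (m * t k) := by
              rw [hQ, pow_succ]
              field_simp
      have h1' : ε / Real.exp (m * t k) ≤ |(∑ i, (q i : ℝ) * x i) + p| :=
        (div_le_iff₀ hEm).mpr (by linarith [h1])
      linarith
    · have hle' := hle i
      have hmul : Real.exp (-t k) * Real.exp (t k) = 1 := by
        rw [← Real.exp_add]; simp
      have h3 : ε * Real.exp (t k) ≤ |(q i : ℝ)| := by
        have h4 := mul_le_mul_of_nonneg_right h2 hE.le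
        rwa [mul_assoc, mul_comm (|(q i : ℝ)|) (Real.exp (t k)), ← mul_assoc, hmul,
          one_mul] at h4
      simp only at hle'
      nlinarith [h3, hle', hε, hE]
end

section
/- Any polynomial f ∈ ℝ[x] of degree at most k is (C, 1/k)-good on ℝ with respect to Lebesgue measure for some constant C = C(k) depending only on k; explicitly, for every interval B and ε > 0, λ({x ∈ B : |f(x)| < ε}) ≤ C(k) (ε / sup_{x∈B} |f(x)|)^{1/k} λ(B). -/
open MeasureTheory Polynomial

namespace Complex

noncomputable def abs : AbsoluteValue ℂ ℝ := NormedField.toAbsoluteValue ℂ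

@[simp] theorem abs_apply_norm (z : ℂ) : abs z = ‖z‖ := rfl

theorem abs_ofReal (x : ℝ) : abs (x : ℂ) = |x| := by simp

end Complex

private lemma mprod_le_mprod (s : Multiset ℂ) (f g : ℂ → ℝ)
    (h0 : ∀ z ∈ s, 0 ≤ f z) (h : ∀ z ∈ s, f z ≤ g z) :
    (s.map f).prod ≤ (s.map g).prod := by
  induction s using Multiset.induction with
  | empty => simp
  | cons a s ih =>
    simp only [Multiset.map_cons, Multiset.prod_cons]
    have hfs : 0 ≤ (s.map f).prod :=
      Multiset.prod_nonneg (by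
        intro x hx
        obtain ⟨z, hz, rfl⟩ := Multiset.mem_map.mp hx
        exact h0 z (Multiset.mem_cons_of_mem hz))
    exact mul_le_mul (h a (Multiset.mem_cons_self a s))
      (ih (fun z hz => h0 z (Multiset.mem_cons_of_mem hz))
          (fun z hz => h z (Multiset.mem_cons_of_mem hz)))
      hfs (le_trans (h0 a (Multiset.mem_cons_self a s)) (h a (Multiset.mem_cons_self a s)))

private lemma pow_card_le_mprod (s : Multiset ℂ) (f : ℂ → ℝ) (c : ℝ) (hc : 0 ≤ c)
    (h : ∀ z ∈ s, c ≤ f z) : c ^ (Multiset.card s) ≤ (s.map f).prod := by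
  have := mprod_le_mprod s (fun _ => c) f (fun _ _ => hc) h
  simpa using this

private lemma mprod_le_pow_card (s : Multiset ℂ) (f : ℂ → ℝ) (c : ℝ)
    (h0 : ∀ z ∈ s, 0 ≤ f z) (h : ∀ z ∈ s, f z ≤ c) :
    (s.map f).prod ≤ c ^ (Multiset.card s) := by
  have := mprod_le_mprod s f (fun _ => c) h0 h
  simpa using this

private lemma mprod_pos (s : Multiset ℂ) (f : ℂ → ℝ) (h : ∀ z ∈ s, 0 < f z) :
    0 < (s.map f).prod := by
  induction s using Multiset.induction with
  | empty => simp
  | cons a s ih =>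
    simp only [Multiset.map_cons, Multiset.prod_cons]
    exact mul_pos (h a (Multiset.mem_cons_self a s))
      (ih (fun z hz => h z (Multiset.mem_cons_of_mem hz)))

private lemma rpow_third (k : ℕ) (hk : 0 < k) :
    (((1:ℝ)/3) ^ k) ^ ((1:ℝ)/k) = 1/3 := by
  rw [← Real.rpow_natCast ((1:ℝ)/3) k, ← Real.rpow_mul (by norm_num)]
  rw [mul_one_div, div_self (by exact_mod_cast hk.ne'), Real.rpow_one]

/-- Any nonzero real polynomial of degree at most `k` is `(C(k), 1/k)`-good on `ℝ`
with respect to Lebesgue measure, for some constant `C(k)` depending only on `k`. -/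
theorem polynomial_good (k : ℕ) (hk : 0 < k) :
    ∃ C : ℝ, 0 < C ∧ ∀ f : Polynomial ℝ, f ≠ 0 → f.natDegree ≤ k →
      ∀ (a r : ℝ), 0 < r → ∀ ε : ℝ, 0 < ε →
        volume {x ∈ Metric.ball a r | |f.eval x| < ε} ≤
          ENNReal.ofReal (C * (ε / ⨆ x ∈ Metric.ball a r, |f.eval x|) ^ ((1 : ℝ) / k)) *
            volume (Metric.ball a r) := by
  refine ⟨9 * k, by positivity, ?_⟩
  intro f hf hdeg a r hr ε hε
  classical
  set g := f.map (algebraMap ℝ ℂ) with hgdef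
  set s := g.roots with hsdef
  set L := Complex.abs ((algebraMap ℝ ℂ) f.leadingCoeff) with hLdef
  have hg0 : g ≠ 0 := Polynomial.map_ne_zero hf
  have hLeq : L = |f.leadingCoeff| := by
    simp [hLdef, Complex.abs_ofReal]
  have hL : 0 < L := by
    rw [hLeq]; exact abs_pos.mpr (leadingCoeff_ne_zero.mpr hf)
  -- evaluation formula
  have habs : ∀ x : ℝ, |f.eval x| = L * ((s.map fun z => Complex.abs (↑x - z)).prod) := by
    intro x
    have hsplits : g.Splits := IsAlgClosed.splits g
    have heq : g = C g.leadingCoeff * (g.roots.map fun z => X - C z).prod :=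
      hsplits.eq_prod_roots
    have hlc : g.leadingCoeff = (algebraMap ℝ ℂ) f.leadingCoeff := leadingCoeff_map _
    have hev : (algebraMap ℝ ℂ) (f.eval x) = g.eval ((algebraMap ℝ ℂ) x) := by
      rw [hgdef, eval_map, eval₂_at_apply]
    have h1 : |f.eval x| = Complex.abs (g.eval ((algebraMap ℝ ℂ) x)) := by
      rw [← hev]; simp
    rw [h1]
    conv_lhs => rw [heq]
    rw [eval_mul, eval_C, map_mul, eval_multiset_prod, map_multiset_prod, Multiset.map_map,
      Multiset.map_map, hlc]
    rw [Multiset.map_congr rfl (fun z _ => by simp :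
      ∀ z ∈ g.roots, ((⇑Complex.abs ∘ eval ((algebraMap ℝ ℂ) x)) ∘ fun z => X - C z) z
        = Complex.abs (↑x - z))]
  have hcard : Multiset.card s = f.natDegree := by
    rw [hsdef, (splits_iff_card_roots).mp (IsAlgClosed.splits g), hgdef, natDegree_map]
  -- the distance-bound function D
  set D : ℂ → ℝ := fun z => r + Complex.abs (z - ↑a) with hDdef
  have hD : ∀ z : ℂ, 0 < D z := fun z => by positivity
  set Q := L * (s.map D).prod with hQdef
  have hQpos : 0 < Q := mul_pos hL (mprod_pos s D (fun z _ => hD z))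
  have hφD : ∀ x ∈ Metric.ball a r, ∀ z : ℂ, Complex.abs (↑x - z) ≤ D z := by
    intro x hx z
    have hxa : Complex.abs (↑x - ↑a) < r := by
      rw [show ((x:ℂ) - (a:ℂ)) = ((x - a : ℝ) : ℂ) by push_cast; ring, Complex.abs_ofReal]
      rw [Metric.mem_ball, Real.dist_eq] at hx
      exact hx
    calc Complex.abs (↑x - z) ≤ Complex.abs (↑x - ↑a) + Complex.abs (↑a - z) := by
          have := Complex.abs.add_le ((x:ℂ) - a) ((a:ℂ) - z)
          simpa using this
      _ ≤ r + Complex.abs (z - ↑a) := by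
          rw [Complex.abs.map_sub a z]; exact add_le_add hxa.le le_rfl
  have hub : ∀ x ∈ Metric.ball a r, |f.eval x| ≤ Q := by
    intro x hx
    rw [habs x, hQdef]
    refine mul_le_mul_of_nonneg_left ?_ hL.le
    exact mprod_le_mprod s _ D (fun z _ => AbsoluteValue.nonneg _ _) (fun z _ => hφD x hx z)
  set M := ⨆ x ∈ Metric.ball a r, |f.eval x| with hMdef
  have hMQ : M ≤ Q :=
    Real.iSup_le (fun x => Real.iSup_le (fun hx => hub x hx) hQpos.le) hQpos.le
  have hge : ∀ x ∈ Metric.ball a r, |f.eval x| ≤ M := by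
    intro x hx
    have hbdd : BddAbove (Set.range fun x => ⨆ _ : x ∈ Metric.ball a r, |f.eval x|) := by
      refine ⟨Q, ?_⟩
      rintro _ ⟨y, rfl⟩
      exact Real.iSup_le (fun hy => hub y hy) hQpos.le
    calc |f.eval x| = ⨆ _ : x ∈ Metric.ball a r, |f.eval x| := (ciSup_pos (f := fun _ => |f.eval x|) hx).symm
      _ ≤ M := le_ciSup hbdd x
  have hMpos : 0 < M := by
    have hinf : (Metric.ball a r).Infinite := by
      rw [Real.ball_eq_Ioo]; exact Set.Ioo_infinite (by linarith)
    obtain ⟨x₀, hx₀b, hx₀r⟩ := (hinf.diff (Polynomial.finite_setOf_isRoot hf)).nonempty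
    have : f.eval x₀ ≠ 0 := fun h => hx₀r h
    exact lt_of_lt_of_le (abs_pos.mpr this) (hge x₀ hx₀b)
  have hεM : (0:ℝ) < ε / M := div_pos hε hMpos
  rcases le_or_gt 1 ((3:ℝ) ^ k * (ε / M)) with hA | hB
  · -- Case A : ε/M is not small, the trivial bound suffices
    have h13 : ((1:ℝ)/3) ^ k ≤ ε / M := by
      have h3k : (0:ℝ) < 3 ^ k := by positivity
      rw [div_pow, one_pow, div_le_iff₀ h3k]
      nlinarith
    have hthird : (1:ℝ)/3 ≤ (ε / M) ^ ((1:ℝ)/k) := by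
      calc (1:ℝ)/3 = (((1:ℝ)/3) ^ k) ^ ((1:ℝ)/k) := (rpow_third k hk).symm
        _ ≤ (ε / M) ^ ((1:ℝ)/k) := Real.rpow_le_rpow (by positivity) h13 (by positivity)
    have hone : (1:ℝ) ≤ 9 * k * (ε / M) ^ ((1:ℝ)/k) := by
      have hk1 : (1:ℝ) ≤ (k:ℝ) := by exact_mod_cast hk
      nlinarith
    calc volume {x ∈ Metric.ball a r | |f.eval x| < ε}
        ≤ volume (Metric.ball a r) := measure_mono (Set.sep_subset _ _)
      _ ≤ ENNReal.ofReal (9 * ↑k * (ε / M) ^ ((1:ℝ)/k)) * volume (Metric.ball a r) :=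
          le_mul_of_one_le_left (zero_le') (ENNReal.one_le_ofReal.mpr hone)
  · -- Case B : ε/M is small
    set b := (3:ℝ) ^ k * (ε / M) with hbdef
    have hb0 : 0 < b := by positivity
    set η := 3 * r * b ^ ((1:ℝ)/k) with hηdef
    have hη : 0 < η := by positivity
    set near := s.filter (fun z => Complex.abs (z - ↑a) < 2 * r) with hneardef
    set far := s.filter (fun z => ¬ Complex.abs (z - ↑a) < 2 * r) with hfardef
    have hsplit_mult : near + far = s := Multiset.filter_add_not _ s
    set j := Multiset.card near with hjdef
    set cf := Multiset.card far with hcfdef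
    have hjcf : j + cf = f.natDegree := by
      rw [hjdef, hcfdef, ← Multiset.card_add, hsplit_mult, hcard]
    have hjk : j ≤ k := le_trans (by omega) hdeg
    have hcfk : cf ≤ k := le_trans (by omega) hdeg
    set Pfar := (far.map D).prod with hPfardef
    set Pnear := (near.map D).prod with hPneardef
    have hPfar : 0 < Pfar := mprod_pos far D (fun z _ => hD z)
    have hPnear : 0 < Pnear := mprod_pos near D (fun z _ => hD z)
    have hPnear3r : Pnear ≤ (3 * r) ^ j := by
      refine mprod_le_pow_card near D (3 * r) (fun z _ => (hD z).le) ?_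
      intro z hz
      have := (Multiset.mem_filter.mp hz).2
      simp only [hDdef]
      linarith
    have hQsplit : Q = L * Pnear * Pfar := by
      rw [hQdef, ← hsplit_mult, Multiset.map_add, Multiset.prod_add]; ring
    -- the covering claim
    have hsub : {x ∈ Metric.ball a r | |f.eval x| < ε} ⊆
        ⋃ z ∈ near.toFinset, Metric.ball z.re η := by
      rintro x ⟨hxb, hxε⟩
      set φ : ℂ → ℝ := fun z => Complex.abs (↑x - z) with hφdef
      have hφ0 : ∀ z : ℂ, 0 ≤ φ z := fun z => AbsoluteValue.nonneg _ _
      have hfar_lb : ∀ z ∈ far, D z * (3:ℝ)⁻¹ ≤ φ z := by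
        intro z hz
        have h2r : 2 * r ≤ Complex.abs (z - ↑a) := not_lt.mp (Multiset.mem_filter.mp hz).2
        have hxa : Complex.abs (↑x - ↑a) < r := by
          rw [show ((x:ℂ) - (a:ℂ)) = ((x - a : ℝ) : ℂ) by push_cast; ring, Complex.abs_ofReal]
          rw [Metric.mem_ball, Real.dist_eq] at hxb
          exact hxb
        have htri : Complex.abs (z - ↑a) ≤ Complex.abs (↑x - z) + Complex.abs (↑x - ↑a) := by
          have := Complex.abs.add_le ((z:ℂ) - x) ((x:ℂ) - a)
          rw [Complex.abs.map_sub z (x:ℂ)] at this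
          simpa using this
        simp only [hDdef, hφdef]
        have : Complex.abs (z - ↑a) - r ≤ Complex.abs (↑x - z) := by linarith
        linarith
      have hWle : Pfar * (3:ℝ)⁻¹ ^ cf ≤ (far.map φ).prod := by
        have h1 := mprod_le_mprod far (fun z => D z * (3:ℝ)⁻¹) φ
          (fun z _ => by positivity) hfar_lb
        rwa [Multiset.prod_map_mul, show (far.map fun _ => (3:ℝ)⁻¹) =
          Multiset.replicate cf (3:ℝ)⁻¹ from Multiset.map_const' far (3:ℝ)⁻¹ ▸ rfl,
          Multiset.prod_replicate] at h1
      have hW : 0 < Pfar * (3:ℝ)⁻¹ ^ cf := by positivity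
      have hx_eval : L * ((near.map φ).prod * (far.map φ).prod) < ε := by
        have := hxε
        rw [habs x, ← hsplit_mult, Multiset.map_add, Multiset.prod_add] at this
        exact this
      have hPn0 : 0 ≤ (near.map φ).prod :=
        Multiset.prod_nonneg (by
          intro y hy
          obtain ⟨z, hz, rfl⟩ := Multiset.mem_map.mp hy
          exact hφ0 z)
      set W := L * (Pfar * (3:ℝ)⁻¹ ^ cf) with hWdef
      have hW0 : 0 < W := by positivity
      have hPnW : (near.map φ).prod * W < ε := by
        calc (near.map φ).prod * W
            ≤ (near.map φ).prod * (L * (far.map φ).prod) := by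
              refine mul_le_mul_of_nonneg_left ?_ hPn0
              rw [hWdef]
              exact mul_le_mul_of_nonneg_left hWle hL.le
          _ = L * ((near.map φ).prod * (far.map φ).prod) := by ring
          _ < ε := hx_eval
      have hεle : ε ≤ b * (3 * r) ^ j * W := by
        have hMR : M ≤ L * (3 * r) ^ j * Pfar := by
          calc M ≤ Q := hMQ
            _ = L * Pnear * Pfar := hQsplit
            _ ≤ L * (3 * r) ^ j * Pfar := by
                refine mul_le_mul_of_nonneg_right ?_ hPfar.le
                exact mul_le_mul_of_nonneg_left hPnear3r hL.le
        have h1 : ε ≤ (ε / M) * (L * (3 * r) ^ j * Pfar) := by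
          rw [div_mul_eq_mul_div, le_div_iff₀ hMpos]
          exact mul_le_mul_of_nonneg_left hMR hε.le
        have h2 : (1:ℝ) ≤ 3 ^ k * (3:ℝ)⁻¹ ^ cf := by
          have h3 : (3:ℝ) ^ cf ≤ 3 ^ k := pow_le_pow_right₀ (by norm_num) hcfk
          rw [inv_pow, ← div_eq_mul_inv, le_div_iff₀ (by positivity)]
          linarith
        have h3 : (ε / M) * (L * (3 * r) ^ j * Pfar) ≤
            (3 ^ k * (3:ℝ)⁻¹ ^ cf) * ((ε / M) * (L * (3 * r) ^ j * Pfar)) := by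
          refine le_mul_of_one_le_left ?_ h2
          positivity
        have h4 : (3 ^ k * (3:ℝ)⁻¹ ^ cf) * ((ε / M) * (L * (3 * r) ^ j * Pfar)) =
            b * (3 * r) ^ j * W := by
          rw [hbdef, hWdef]; ring
        linarith
      have hbη : b * (3 * r) ^ j ≤ η ^ j := by
        have hjk' : (1:ℝ)/k * j ≤ 1 := by
          rw [div_mul_eq_mul_div, one_mul, div_le_one (by exact_mod_cast hk)]
          exact_mod_cast hjk
        have hpow : (b ^ ((1:ℝ)/k)) ^ j = b ^ ((1:ℝ)/k * j) := by
          rw [← Real.rpow_natCast (b ^ ((1:ℝ)/k)) j, ← Real.rpow_mul hb0.le]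
        have hbb : b ≤ b ^ ((1:ℝ)/k * j) := by
          calc b = b ^ (1:ℝ) := (Real.rpow_one b).symm
            _ ≤ b ^ ((1:ℝ)/k * j) := Real.rpow_le_rpow_of_exponent_ge hb0 hB.le hjk'
        have hηj : η ^ j = (3 * r) ^ j * b ^ ((1:ℝ)/k * (j:ℕ)) := by
          rw [hηdef, mul_pow, hpow]
        calc b * (3 * r) ^ j ≤ b ^ ((1:ℝ)/k * j) * (3 * r) ^ j := by
              refine mul_le_mul_of_nonneg_right hbb (by positivity)
          _ = η ^ j := by rw [hηj]; ring
      have hPnlt : (near.map φ).prod < η ^ j := by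
        have h1 : (near.map φ).prod * W < η ^ j * W :=
          lt_of_lt_of_le (lt_of_lt_of_le hPnW hεle)
            (mul_le_mul_of_nonneg_right hbη hW0.le)
        exact lt_of_mul_lt_mul_right h1 hW0.le
      by_contra hc
      rw [Set.mem_iUnion₂] at hc
      push_neg at hc
      have hall : ∀ z ∈ near, η ≤ φ z := by
        intro z hz
        have hznf : z ∈ near.toFinset := Multiset.mem_toFinset.mpr hz
        have hxz : x ∉ Metric.ball z.re η := hc z hznf
        rw [Metric.mem_ball, Real.dist_eq, not_lt] at hxz
        calc η ≤ |x - z.re| := hxz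
          _ ≤ Complex.abs (↑x - z) := by
              have := Complex.abs_re_le_norm ((x:ℂ) - z)
              simpa using this
          _ = φ z := rfl
      exact absurd hPnlt (not_lt.mpr (pow_card_le_mprod near φ η hη.le hall))
    -- measure computation
    calc volume {x ∈ Metric.ball a r | |f.eval x| < ε}
        ≤ volume (⋃ z ∈ near.toFinset, Metric.ball z.re η) := measure_mono hsub
      _ ≤ ∑ z ∈ near.toFinset, volume (Metric.ball z.re η) :=
          measure_biUnion_finset_le _ _
      _ = ∑ _z ∈ near.toFinset, ENNReal.ofReal (2 * η) := by
          refine Finset.sum_congr rfl ?_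
          intro z _
          exact Real.volume_ball _ _
      _ = near.toFinset.card • ENNReal.ofReal (2 * η) := Finset.sum_const _
      _ ≤ (k : ENNReal) * ENNReal.ofReal (2 * η) := by
          rw [nsmul_eq_mul]
          refine mul_le_mul_left ?_ _
          have hcle : near.toFinset.card ≤ k :=
            le_trans (Multiset.toFinset_card_le near) hjk
          exact_mod_cast Nat.cast_le.mpr hcle
      _ ≤ ENNReal.ofReal (9 * ↑k * (ε / M) ^ ((1:ℝ)/k)) * volume (Metric.ball a r) := by
          rw [Real.volume_ball]
          have hknn : (k : ENNReal) = ENNReal.ofReal (k:ℝ) := by simp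
          rw [hknn, ← ENNReal.ofReal_mul (by positivity)]
          rw [← ENNReal.ofReal_mul (by positivity)]
          refine ENNReal.ofReal_le_ofReal ?_
          have h3 : b ^ ((1:ℝ)/k) = 3 * (ε/M) ^ ((1:ℝ)/k) := by
            rw [hbdef, Real.mul_rpow (by positivity) hεM.le,
              ← Real.rpow_natCast (3:ℝ) k, ← Real.rpow_mul (by norm_num)]
            rw [mul_one_div, div_self (by exact_mod_cast hk.ne' : (k:ℝ) ≠ 0), Real.rpow_one]
          rw [hηdef, h3]
          apply le_of_eq
          ring
end

section
/- Let M be a connected real analytic submanifold of ℝ^m. If M is covered by a countable union of sets of the form M ∩ H_i, where each H_i is an affine hyperplane, then M is contained in a single affine hyperplane H_{i_0}. -/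
open scoped BigOperators

/-- A connected real analytic submanifold of `ℝ^m` (presented as the image of a real
analytic map on a connected open set) which is covered by countably many affine
hyperplanes is contained in a single one of them. -/
theorem analytic_image_covered_by_hyperplanes (n m : ℕ) (U : Set (Fin n → ℝ))
    (hUo : IsOpen U) (hUc : IsConnected U)
    (f : (Fin n → ℝ) → (Fin m → ℝ)) (hf : AnalyticOnNhd ℝ f U)
    (a : ℕ → Fin m → ℝ) (b : ℕ → ℝ) (ha : ∀ i, a i ≠ 0)
    (hcover : f '' U ⊆ ⋃ i : ℕ, {y : Fin m → ℝ | ∑ j, a i j * y j = b i}) :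
    ∃ i₀ : ℕ, f '' U ⊆ {y : Fin m → ℝ | ∑ j, a i₀ j * y j = b i₀} := by
  -- the continuous linear functionals
  set L : ℕ → ((Fin m → ℝ) →L[ℝ] ℝ) := fun i =>
    ∑ j, a i j • (ContinuousLinearMap.proj j : (Fin m → ℝ) →L[ℝ] ℝ) with hL
  have hLapp : ∀ i y, L i y = ∑ j, a i j * y j := by
    intro i y
    simp [hL, ContinuousLinearMap.sum_apply, ContinuousLinearMap.proj_apply]
  -- the analytic functions g i
  set g : ℕ → (Fin n → ℝ) → ℝ := fun i x => L i (f x) - b i with hg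
  have hga : ∀ i, AnalyticOnNhd ℝ (g i) U := by
    intro i
    have h1 : AnalyticOnNhd ℝ (fun x => L i (f x)) U :=
      fun x hx => ((L i).analyticAt _).comp (hf x hx)
    exact h1.sub analyticOnNhd_const
  -- Baire category on the subtype U
  have hemb := hUo.isOpenEmbedding_subtypeVal
  haveI : LocallyCompactSpace U := hemb.locallyCompactSpace
  haveI : Nonempty U := hUc.nonempty.to_subtype
  set C : ℕ → Set U := fun i => {x : U | g i (x : Fin n → ℝ) = 0} with hC
  have hCc : ∀ i, IsClosed (C i) := by
    intro i
    have hcont : Continuous fun x : U => g i (x : Fin n → ℝ) := by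
      have : ContinuousOn (g i) U := (hga i).continuousOn
      exact this.restrict
    exact isClosed_eq hcont continuous_const
  have hCu : ⋃ i, C i = Set.univ := by
    apply Set.eq_univ_of_forall
    intro x
    have : f x ∈ ⋃ i : ℕ, {y : Fin m → ℝ | ∑ j, a i j * y j = b i} :=
      hcover ⟨x, x.2, rfl⟩
    obtain ⟨i, hi⟩ := Set.mem_iUnion.1 this
    exact Set.mem_iUnion.2 ⟨i, by simp [hC, hg, hLapp, hi.out]⟩
  obtain ⟨i₀, x, hx⟩ := nonempty_interior_of_iUnion_of_closed hCc hCu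
  refine ⟨i₀, ?_⟩
  -- g i₀ vanishes near ↑x
  have hs : IsOpen (Subtype.val '' interior (C i₀)) := hemb.isOpenMap _ isOpen_interior
  have hxev : g i₀ =ᶠ[nhds (x : Fin n → ℝ)] 0 := by
    filter_upwards [hs.mem_nhds ⟨x, hx, rfl⟩] with y hy
    obtain ⟨z, hz, rfl⟩ := hy
    have hz' : z ∈ C i₀ := interior_subset hz
    exact hz'
  have hEq : Set.EqOn (g i₀) 0 U :=
    (hga i₀).eqOn_zero_of_preconnected_of_eventuallyEq_zero hUc.isPreconnected x.2 hxev
  rintro y ⟨w, hw, rfl⟩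
  have := hEq hw
  simp only [hg, Pi.zero_apply, sub_eq_zero] at this
  simpa [hLapp] using this
end
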